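/- arXiv:1808.08636 — 4 statements merged into one kernel-verified Lean document; each statement's English description precedes it below -/
import Mathlib

section
/- For every positive integer N and every real t with 0 < t < π and t ≠ 2π/(N+2), Σ_{k=1}^{N+1} sin²(kπ/(N+2)) · e^{ikt} = sin²(π/(N+2)) · (sin((N+2)t/2)/(cos t − cos(2π/(N+2)))) · (sin t/(1 − cos t)) · e^{i(N+2)t/2}. -/
lemma expI_ne_one {s : ℝ} (hs : s ≠ 0) (h2 : |s| < 2 * Real.pi) :
    Complex.exp (Complex.I * s) ≠ 1 := by
  intro h
  rw [Complex.exp_eq_one_iff] at h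
  obtain ⟨n, hn⟩ := h
  have hc : ((s : ℝ) : ℂ) = ((n * (2 * Real.pi) : ℝ) : ℂ) := by
    apply mul_left_cancel₀ Complex.I_ne_zero
    push_cast
    linear_combination hn
  have hr : s = n * (2 * Real.pi) := Complex.ofReal_injective hc
  rcases eq_or_ne n 0 with h | h
  · simp [h] at hr; exact hs hr
  · have h1 : (1 : ℝ) ≤ |(n : ℝ)| := by
      rw [← Int.cast_abs]
      exact_mod_cast Int.one_le_abs h
    have h3 : 2 * Real.pi ≤ |s| := by
      rw [hr, abs_mul, abs_of_pos (by positivity : (0:ℝ) < 2 * Real.pi)]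
      nlinarith [Real.pi_pos]
    linarith

lemma cos_exp (x : ℂ) :
    Complex.cos x = (Complex.exp (Complex.I * x) + (Complex.exp (Complex.I * x))⁻¹) / 2 := by
  have h := Complex.two_cos (x := x)
  rw [show -x*Complex.I = -(x*Complex.I) by ring, Complex.exp_neg] at h
  rw [show Complex.I * x = x * Complex.I by ring]
  linear_combination h / 2

lemma sin_exp (x : ℂ) :
    Complex.sin x = (Complex.exp (Complex.I * x) - (Complex.exp (Complex.I * x))⁻¹) * (-Complex.I) / 2 := by
  have h := Complex.two_sin (x := x)
  rw [show -x*Complex.I = -(x*Complex.I) by ring, Complex.exp_neg] at h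
  rw [show Complex.I * x = x * Complex.I by ring]
  linear_combination h / 2

lemma sin_sq_c (x : ℂ) :
    Complex.sin x ^ 2 = (2 - Complex.exp (Complex.I * (2*x)) - (Complex.exp (Complex.I * (2*x)))⁻¹) / 4 := by
  have h1 : Complex.cos (2*x) = 2 * Complex.cos x ^ 2 - 1 := Complex.cos_two_mul x
  have h2 : Complex.sin x ^ 2 + Complex.cos x ^ 2 = 1 := Complex.sin_sq_add_cos_sq x
  have h3 := cos_exp (2*x)
  linear_combination h1/2 + h2 - h3/2

set_option maxHeartbeats 2000000 in
theorem stmt4 (N : ℕ) (hN : 0 < N) (t : ℝ) (ht0 : 0 < t) (htπ : t < Real.pi)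
    (ht : t ≠ 2 * Real.pi / (N + 2)) :
    ∑ k ∈ Finset.Icc 1 (N + 1),
        (Real.sin (k * Real.pi / (N + 2)) ^ 2 : ℝ) * Complex.exp (Complex.I * (k * t)) =
      (Real.sin (Real.pi / (N + 2)) ^ 2 : ℝ) *
        ((Real.sin ((N + 2) * t / 2) /
          (Real.cos t - Real.cos (2 * Real.pi / (N + 2)))) : ℝ) *
        ((Real.sin t / (1 - Real.cos t)) : ℝ) *
        Complex.exp (Complex.I * ((N + 2) * t / 2)) := by
  have hπ := Real.pi_pos
  have hN2 : (0:ℝ) < (N:ℝ) + 2 := by positivity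
  have hN2C : ((N:ℂ) + 2) ≠ 0 := by exact_mod_cast (by omega : N + 2 ≠ 0)
  set a : ℝ := 2 * Real.pi / (N + 2) with ha
  have ha0 : 0 < a := by positivity
  have haπ : a < Real.pi := by
    rw [ha, div_lt_iff₀ hN2]
    have h3 : (3:ℝ) ≤ (N:ℝ) + 2 := by exact_mod_cast (by omega : 3 ≤ N + 2)
    nlinarith
  have hac : ((a:ℝ):ℂ) = 2*(Real.pi:ℂ)/((N:ℂ)+2) := by rw [ha]; push_cast; ring
  push_cast
  set z := Complex.exp (Complex.I * (t:ℂ)) with hz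
  set w := Complex.exp (Complex.I * ((a:ℝ):ℂ)) with hw
  set v := Complex.exp (Complex.I * (((N:ℂ) + 2) * (t:ℂ) / 2)) with hv
  have hz0 : z ≠ 0 := Complex.exp_ne_zero _
  have hw0 : w ≠ 0 := Complex.exp_ne_zero _
  have hv0 : v ≠ 0 := Complex.exp_ne_zero _
  have hz1 : z ≠ 1 := expI_ne_one ht0.ne' (by rw [abs_of_pos ht0]; linarith)
  have hzw : z * w = Complex.exp (Complex.I * ((t + a : ℝ) : ℂ)) := by
    rw [hz, hw, ← Complex.exp_add]; congr 1; push_cast; ring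
  have hzw1 : z * w ≠ 1 := by
    rw [hzw]
    exact expI_ne_one (by positivity : (0:ℝ) < t + a).ne'
      (by rw [abs_of_pos (by positivity)]; linarith)
  have hzwi : z * w⁻¹ = Complex.exp (Complex.I * ((t - a : ℝ) : ℂ)) := by
    rw [hz, hw, ← Complex.exp_neg, ← Complex.exp_add]; congr 1; push_cast; ring
  have hzwi1 : z * w⁻¹ ≠ 1 := by
    rw [hzwi]
    exact expI_ne_one (sub_ne_zero.mpr ht) (by rw [abs_lt]; constructor <;> linarith)
  have hzw2 : z - w ≠ 0 := by
    rw [sub_ne_zero]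
    intro h
    exact hzwi1 (by rw [h, mul_inv_cancel₀ hw0])
  have hwM : w ^ (N + 2) = 1 := by
    rw [hw, ← Complex.exp_nat_mul,
      show ((N+2 : ℕ):ℂ) * (Complex.I * ((a:ℝ):ℂ)) = 2*(Real.pi:ℂ)*Complex.I by
        rw [hac]; push_cast; field_simp]
    exact Complex.exp_two_pi_mul_I
  have hvv : v * v = z ^ (N + 2) := by
    rw [hv, hz, ← Complex.exp_add, ← Complex.exp_nat_mul]; congr 1; push_cast; ring
  -- cos/sin rewrites
  have hct := cos_exp (t:ℂ)
  rw [← hz] at hct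
  have hca := cos_exp ((a:ℝ):ℂ)
  rw [← hw] at hca
  have hst := sin_exp (t:ℂ)
  rw [← hz] at hst
  have hsv := sin_exp (((N:ℂ)+2)*(t:ℂ)/2)
  rw [← hv] at hsv
  have hE : Complex.exp (Complex.I*(2*((Real.pi:ℂ)/((N:ℂ)+2)))) = w := by
    rw [hw]; congr 1; rw [hac]; ring
  have hsπ := sin_sq_c ((Real.pi:ℂ)/((N:ℂ)+2))
  rw [hE] at hsπ
  -- sum conversion
  have hterm : ∀ k ∈ Finset.Icc 1 (N+1),
      Complex.sin ((k:ℂ) * (Real.pi:ℂ)/((N:ℂ)+2))^2 * Complex.exp (Complex.I*((k:ℂ)*(t:ℂ)))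
        = (2 - w^k - (w⁻¹)^k)/4 * z^k := by
    intro k _
    have e1 : Complex.exp (Complex.I*((k:ℂ)*(t:ℂ))) = z^k := by
      rw [show Complex.I*((k:ℂ)*(t:ℂ)) = (k:ℂ)*(Complex.I*(t:ℂ)) by ring,
        Complex.exp_nat_mul, ← hz]
    have e2 : Complex.exp (Complex.I*(2*((k:ℂ) * (Real.pi:ℂ)/((N:ℂ)+2)))) = w^k := by
      rw [show Complex.I*(2*((k:ℂ)*(Real.pi:ℂ)/((N:ℂ)+2))) = (k:ℂ)*(Complex.I*((a:ℝ):ℂ)) by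
          rw [hac]; field_simp,
        Complex.exp_nat_mul, ← hw]
    rw [sin_sq_c, e2, e1, inv_pow]
  rw [Finset.sum_congr rfl hterm]
  have hins : Finset.range (N+2) = insert 0 (Finset.Icc 1 (N+1)) := by
    ext x; simp only [Finset.mem_range, Finset.mem_insert, Finset.mem_Icc]; omega
  have hsum2 : ∑ k ∈ Finset.Icc 1 (N+1), (2 - w^k - (w⁻¹)^k)/4 * z^k
      = ∑ k ∈ Finset.range (N+2), (2 - w^k - (w⁻¹)^k)/4 * z^k := by
    rw [hins, Finset.sum_insert (by simp)]
    norm_num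
  rw [hsum2]
  have hsplit : ∀ k ∈ Finset.range (N+2),
      (2 - w^k - (w⁻¹)^k)/4 * z^k = (2*z^k - (z*w)^k - (z*w⁻¹)^k)/4 := by
    intro k _; rw [mul_pow, mul_pow]; ring
  rw [Finset.sum_congr rfl hsplit]
  rw [← Finset.sum_div, Finset.sum_sub_distrib, Finset.sum_sub_distrib, ← Finset.mul_sum,
      geom_sum_eq hz1, geom_sum_eq hzw1, geom_sum_eq hzwi1,
      mul_pow, mul_pow, inv_pow, hwM, inv_one, mul_one, ← hvv]
  rw [show z * w⁻¹ - 1 = (z - w)/w by field_simp]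
  have hctca : Complex.cos (t:ℂ) - Complex.cos ((a:ℝ):ℂ) = (z - w)*(z*w - 1)/(2*z*w) := by
    rw [hct, hca]; field_simp; ring
  have hct1 : (1:ℂ) - Complex.cos (t:ℂ) = -((z-1)^2)/(2*z) := by
    rw [hct]; field_simp; ring
  rw [hsπ, hctca, hct1, hst, hsv]
  have hz1' : z - 1 ≠ 0 := sub_ne_zero.mpr hz1
  have hzw1' : z * w - 1 ≠ 0 := sub_ne_zero.mpr hzw1
  have e1 : (2:ℂ) - w - w⁻¹ = -((1-w)^2)/w := by field_simp; ring
  have e2 : v - v⁻¹ = (v*v-1)/v := by field_simp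
  have e3 : z - z⁻¹ = (z*z-1)/z := by field_simp
  rw [e1, e2, e3, ← mul_div_assoc 2 (v*v-1) (z-1), div_div_eq_mul_div (v*v-1) (z-w) w,
      div_sub_div _ _ hz1' hzw1', div_sub_div _ _ (mul_ne_zero hz1' hzw1') hzw2, div_div]
  simp only [mul_div_assoc']
  simp only [div_div, div_mul_div_comm, div_div_eq_mul_div, div_mul_eq_mul_div, div_neg,
    neg_div, mul_neg, neg_mul, neg_neg]
  simp only [mul_div_assoc']
  simp only [div_div, div_mul_div_comm, div_div_eq_mul_div, div_mul_eq_mul_div, div_neg,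
    neg_div, mul_neg, neg_mul, neg_neg]
  rw [div_eq_div_iff (by
      exact mul_ne_zero (mul_ne_zero (mul_ne_zero hz1' hzw1') hzw2) (by norm_num)) (by
      exact mul_ne_zero (mul_ne_zero hv0 hz0)
        (mul_ne_zero (mul_ne_zero (mul_ne_zero (mul_ne_zero
          (mul_ne_zero hw0 (by norm_num)) (by norm_num)) (mul_ne_zero hzw2 hzw1'))
          (by norm_num)) (pow_ne_zero 2 hz1')))]
  ring_nf
  simp only [Complex.I_sq]
  ring
end

section
/- For every positive integer N, the absolute value of P_N evaluated at −1 satisfies |P_N(−1)| = (1/4)·sec²(π/(N+2)). -/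
/-- Evaluation of the `k`-th Chebyshev polynomial of the second kind at `x`. -/
noncomputable def Ueval (k : ℤ) (x : ℝ) : ℝ := (Polynomial.Chebyshev.U ℝ k).eval x

/-- Evaluation of the derivative of the `k`-th Chebyshev polynomial of the second kind at `x`. -/
noncomputable def U'eval (k : ℤ) (x : ℝ) : ℝ :=
  (Polynomial.derivative (Polynomial.Chebyshev.U ℝ k)).eval x

/-- The polynomial `P_N(z) = (1/U'_N(cos(π/(N+2)))) · Σ_{k=1}^N U'_{N−k+1}(cos(π/(N+2))) ·
U_{k−1}(cos(π/(N+2))) · z^k`. -/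
noncomputable def P (N : ℕ) (z : ℂ) : ℂ :=
  (1 / U'eval N (Real.cos (Real.pi / (N + 2))) : ℝ) *
    ∑ k ∈ Finset.Icc 1 N,
      ((U'eval (N - k + 1) (Real.cos (Real.pi / (N + 2))) *
        Ueval (k - 1) (Real.cos (Real.pi / (N + 2)))) : ℝ) * z ^ k

private lemma geo1 (x : ℂ) (n : ℕ) :
    (x - 1) * ∑ k ∈ Finset.Icc 1 n, x ^ k = x ^ (n+1) - x := by
  induction n with
  | zero => simp
  | succ n ih =>
    rw [Finset.sum_Icc_succ_top (by omega), mul_add, ih]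
    ring

private lemma geo2 (x : ℂ) (n : ℕ) :
    (x - 1)^2 * ∑ k ∈ Finset.Icc 1 n, (k : ℂ) * x ^ k
      = n * x ^ (n+2) - (n+1) * x ^ (n+1) + x := by
  induction n with
  | zero => simp
  | succ n ih =>
    rw [Finset.sum_Icc_succ_top (by omega), mul_add, ih]
    push_cast
    ring

private lemma geo3 (n : ℕ) : ∑ k ∈ Finset.Icc 1 n, (-1 : ℂ) ^ k = ((-1)^n - 1)/2 := by
  induction n with
  | zero => simp
  | succ n ih =>
    rw [Finset.sum_Icc_succ_top (by omega), ih]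
    ring

private lemma deriv_eval (θ : ℝ) (m : ℤ) :
    U'eval m (Real.cos θ) * (Real.sin θ)^3
      = Real.cos θ * Real.sin ((m+1)*θ) - (m+1) * Real.cos ((m+1)*θ) * Real.sin θ := by
  have h := Polynomial.Chebyshev.add_one_mul_T_eq_poly_in_U (R := ℝ) m
  have h2 := congrArg (Polynomial.eval (Real.cos θ)) h
  simp only [Polynomial.eval_mul, Polynomial.eval_sub, Polynomial.eval_add, Polynomial.eval_one,
    Polynomial.eval_X, Polynomial.eval_pow, Polynomial.eval_intCast,
    Polynomial.Chebyshev.T_real_cos] at h2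
  have hu := Polynomial.Chebyshev.U_real_cos θ m
  have hsq : Real.sin θ ^ 2 = 1 - Real.cos θ ^ 2 := Real.sin_sq θ
  unfold U'eval
  push_cast at h2 ⊢
  linear_combination (Real.sin θ) * h2 + (Real.cos θ) * hu +
    (Real.sin θ * (Polynomial.derivative (Polynomial.Chebyshev.U ℝ m)).eval (Real.cos θ)) * hsq

private lemma expI (x : ℝ) :
    Complex.exp ((x:ℂ) * Complex.I) = (Real.cos x : ℂ) + (Real.sin x : ℂ) * Complex.I := by
  rw [Complex.exp_mul_I, Complex.ofReal_cos, Complex.ofReal_sin]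

private lemma exp_pow (x : ℝ) (k : ℕ) :
    Complex.exp ((x:ℂ) * Complex.I) ^ k = Complex.exp (((k*x : ℝ):ℂ) * Complex.I) := by
  rw [← Complex.exp_nat_mul]
  congr 1
  push_cast
  ring

open Complex in
set_option maxHeartbeats 1000000 in
theorem stmt7 (N : ℕ) (hN : 0 < N) :
    ‖P N (-1)‖ = (1 / 4) * (1 / Real.cos (Real.pi / (N + 2))) ^ 2 := by
  have hN2 : (0:ℝ) < (N:ℝ) + 2 := by positivity
  set θ : ℝ := Real.pi / (N + 2) with hθdef
  have hπ : ((N:ℝ)+2) * θ = Real.pi := by rw [hθdef]; field_simp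
  have hθpos : 0 < θ := by rw [hθdef]; positivity
  have hθlt : θ < Real.pi / 2 := by
    rw [hθdef]
    apply div_lt_div_of_pos_left Real.pi_pos two_pos
    have : (1:ℝ) ≤ (N:ℝ) := by exact_mod_cast hN
    linarith
  have hcpos : 0 < Real.cos θ := Real.cos_pos_of_mem_Ioo ⟨by linarith [Real.pi_pos], hθlt⟩
  have hspos : 0 < Real.sin θ := Real.sin_pos_of_pos_of_lt_pi hθpos
    (by linarith [Real.pi_pos])
  have hsne : Real.sin θ ≠ 0 := ne_of_gt hspos
  have hcne : Real.cos θ ≠ 0 := ne_of_gt hcpos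
  -- complex exponential setup
  set z : ℂ := Complex.exp ((θ:ℂ) * Complex.I) with hzdef
  set zi : ℂ := Complex.exp (((-θ : ℝ):ℂ) * Complex.I) with hzidef
  have hz1 : z = (Real.cos θ : ℂ) + (Real.sin θ : ℂ) * I := expI θ
  have hzi1 : zi = (Real.cos θ : ℂ) - (Real.sin θ : ℂ) * I := by
    rw [hzidef, expI, Real.cos_neg, Real.sin_neg]; push_cast; ring
  have hzzi : z * zi = 1 := by
    rw [hzdef, hzidef, ← Complex.exp_add]
    push_cast
    rw [show (θ:ℂ) * I + -(θ:ℂ) * I = 0 by ring, Complex.exp_zero]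
  have hz0 : z ≠ 0 := Complex.exp_ne_zero _
  have hzi_val : zi = z⁻¹ := eq_inv_of_mul_eq_one_right hzzi
  have hπC : ((N:ℂ)+2) * (θ:ℂ) = (Real.pi : ℂ) := by exact_mod_cast congrArg Complex.ofReal hπ
  have hzN : z^(N+2) = -1 := by
    rw [hzdef, exp_pow]
    rw [show (((N+2 : ℕ) * θ : ℝ):ℂ) = (Real.pi:ℂ) by push_cast; linear_combination hπC]
    exact Complex.exp_pi_mul_I
  have hziN : zi^(N+2) = -1 := by
    rw [hzidef, exp_pow]
    rw [show ((((N+2 : ℕ)) * (-θ) : ℝ):ℂ) = -(Real.pi:ℂ) by push_cast; linear_combination -hπC]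
    rw [show (-(Real.pi:ℂ)) * I = -((Real.pi:ℂ) * I) by ring, Complex.exp_neg,
      Complex.exp_pi_mul_I]
    norm_num
  have hZzi : z^(N+1) = -zi := by
    have h1 : z^(N+1) * z = -1 := by rw [← pow_succ]; exact hzN
    linear_combination zi * h1 - z^(N+1) * hzzi
  have hZz : zi^(N+1) = -z := by
    have h1 : zi^(N+1) * zi = -1 := by rw [← pow_succ]; exact hziN
    have hzzi' : zi * z = 1 := by rw [mul_comm]; exact hzzi
    linear_combination z * h1 - zi^(N+1) * hzzi'
  have ha1 : (-z^2)^(N+1) = -((-1:ℂ)^N) * zi^2 := by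
    rw [neg_pow, pow_right_comm, hZzi, pow_succ]; ring
  have ha2 : (-z^2)^(N+2) = (-1:ℂ)^N * zi^2 * z^2 := by rw [pow_succ, ha1]; ring
  have hb1 : (-zi^2)^(N+1) = -((-1:ℂ)^N) * z^2 := by
    rw [neg_pow, pow_right_comm, hZz, pow_succ]; ring
  have hb2 : (-zi^2)^(N+2) = (-1:ℂ)^N * z^2 * zi^2 := by rw [pow_succ, hb1]; ring
  have hcz : (Real.cos θ : ℂ) = (z + zi)/2 := by rw [hz1, hzi1]; ring
  have hsz : (Real.sin θ : ℂ) = (z - zi) * (-I)/2 := by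
    rw [hz1, hzi1]
    linear_combination (Real.sin θ : ℂ) * Complex.I_sq
  have hs2 : (Real.sin θ : ℂ)^2 = -(z - zi)^2/4 := by
    rw [hsz]; linear_combination ((z - zi)^2/4) * Complex.I_sq
  -- the per-term identity
  have hterm : ∀ k ∈ Finset.Icc 1 N,
      ((U'eval ((N:ℤ) - (k:ℤ) + 1) (Real.cos θ) * Ueval ((k:ℤ) - 1) (Real.cos θ) : ℝ) : ℂ)
        * (-1)^k * ((Real.sin θ : ℂ))^4
      = (-((z+zi)+((N:ℂ)+2)*(z-zi))/8) * (-z^2)^k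
        + (-((z+zi)-((N:ℂ)+2)*(z-zi))/8) * (-zi^2)^k
        + ((z+zi)/4) * (-1)^k
        + ((z-zi)/8) * ((k:ℂ) * (-z^2)^k)
        + (-(z-zi)/8) * ((k:ℂ) * (-zi^2)^k) := by
    intro k hk
    -- real facts
    have hu'k : U'eval ((N:ℤ) - (k:ℤ) + 1) (Real.cos θ) * (Real.sin θ)^3
        = Real.cos θ * Real.sin ((k:ℝ)*θ)
          + ((N:ℝ) - (k:ℝ) + 2) * Real.cos ((k:ℝ)*θ) * Real.sin θ := by
      have h := deriv_eval θ ((N:ℤ) - (k:ℤ) + 1)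
      push_cast at h
      have hang : ((N:ℝ) - (k:ℝ) + 1 + 1)*θ = Real.pi - (k:ℝ)*θ := by linear_combination hπ
      rw [hang, Real.sin_pi_sub, Real.cos_pi_sub] at h
      linear_combination h
    have huk : Ueval ((k:ℤ) - 1) (Real.cos θ) * Real.sin θ = Real.sin ((k:ℝ)*θ) := by
      have h := Polynomial.Chebyshev.U_real_cos θ ((k:ℤ) - 1)
      unfold Ueval
      push_cast at h ⊢
      rw [show ((k:ℝ) - 1 + 1) = (k:ℝ) by ring] at h
      exact h
    have ht : (U'eval ((N:ℤ) - (k:ℤ) + 1) (Real.cos θ) * Ueval ((k:ℤ) - 1) (Real.cos θ))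
        * (Real.sin θ)^4
        = (Real.cos θ * Real.sin ((k:ℝ)*θ)
            + ((N:ℝ) - (k:ℝ) + 2) * Real.cos ((k:ℝ)*θ) * Real.sin θ) * Real.sin ((k:ℝ)*θ) := by
      linear_combination (Ueval ((k:ℤ) - 1) (Real.cos θ) * Real.sin θ) * hu'k
        + (Real.cos θ * Real.sin ((k:ℝ)*θ)
            + ((N:ℝ) - (k:ℝ) + 2) * Real.cos ((k:ℝ)*θ) * Real.sin θ) * huk
    have htC : ((U'eval ((N:ℤ) - (k:ℤ) + 1) (Real.cos θ) * Ueval ((k:ℤ) - 1) (Real.cos θ) : ℝ) : ℂ)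
        * ((Real.sin θ : ℂ))^4
        = ((Real.cos θ : ℂ) * (Real.sin ((k:ℝ)*θ) : ℂ)
            + ((N:ℂ) - (k:ℂ) + 2) * (Real.cos ((k:ℝ)*θ) : ℂ) * (Real.sin θ : ℂ))
          * (Real.sin ((k:ℝ)*θ) : ℂ) := by exact_mod_cast congrArg Complex.ofReal ht
    -- complex exponential facts for this k
    have hpk : z^k = (Real.cos ((k:ℝ)*θ) : ℂ) + (Real.sin ((k:ℝ)*θ) : ℂ) * I := by
      rw [hzdef, exp_pow, expI]
    have hqk : zi^k = (Real.cos ((k:ℝ)*θ) : ℂ) - (Real.sin ((k:ℝ)*θ) : ℂ) * I := by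
      rw [hzidef, exp_pow]
      rw [show ((k:ℝ) * (-θ) : ℝ) = -((k:ℝ)*θ) by ring, expI, Real.cos_neg, Real.sin_neg]
      push_cast; ring
    have hpq : z^k * zi^k = 1 := by rw [← mul_pow, hzzi, one_pow]
    have hsin : (Real.sin ((k:ℝ)*θ) : ℂ) = (z^k - zi^k) * (-I)/2 := by
      rw [hpk, hqk]
      linear_combination (Real.sin ((k:ℝ)*θ) : ℂ) * Complex.I_sq
    have hcos : (Real.cos ((k:ℝ)*θ) : ℂ) = (z^k + zi^k)/2 := by rw [hpk, hqk]; ring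
    have F1 : (Real.sin ((k:ℝ)*θ) : ℂ) * (Real.sin ((k:ℝ)*θ) : ℂ)
        = (2 - (z^k)^2 - (zi^k)^2)/4 := by
      rw [hsin]
      linear_combination ((z^k - zi^k)^2/4) * Complex.I_sq + (1/2 : ℂ) * hpq
    have F2 : (Real.sin θ : ℂ) * ((Real.sin ((k:ℝ)*θ) : ℂ) * (Real.cos ((k:ℝ)*θ) : ℂ))
        = -(z - zi) * ((z^k)^2 - (zi^k)^2)/8 := by
      rw [hsz, hsin, hcos]
      linear_combination ((z - zi) * ((z^k)^2 - (zi^k)^2)/8) * Complex.I_sq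
    have ha : (-z^2)^k = (-1:ℂ)^k * (z^k)^2 := by rw [neg_pow, pow_right_comm]
    have hb : (-zi^2)^k = (-1:ℂ)^k * (zi^k)^2 := by rw [neg_pow, pow_right_comm]
    linear_combination ((-1:ℂ)^k) * htC
      + ((-1:ℂ)^k * (Real.cos θ : ℂ)) * F1
      + ((-1:ℂ)^k * ((N:ℂ) - (k:ℂ) + 2)) * F2
      + ((-1:ℂ)^k * (2 - (z^k)^2 - (zi^k)^2)/4) * hcz
      - ((-((z+zi)+((N:ℂ)+2)*(z-zi))/8) + ((z-zi)/8) * (k:ℂ)) * ha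
      - ((-((z+zi)-((N:ℂ)+2)*(z-zi))/8) + (-(z-zi)/8) * (k:ℂ)) * hb
  -- nonvanishing of denominators
  have hsin2pos : 0 < Real.sin (2*θ) := by
    apply Real.sin_pos_of_pos_of_lt_pi (by linarith)
    calc 2*θ < 2*(Real.pi/2) := by linarith
    _ = Real.pi := by ring
  have hden1 : (-z^2 : ℂ) - 1 ≠ 0 := by
    intro h
    have h2 : z^2 = -1 := by linear_combination -h
    have h3 : z^2 = Complex.exp (((2*θ : ℝ):ℂ) * Complex.I) := by
      rw [hzdef, exp_pow θ 2]; norm_num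
    have him := Complex.exp_ofReal_mul_I_im (2*θ)
    rw [← h3, h2] at him
    simp at him
    linarith
  have hden2 : (-zi^2 : ℂ) - 1 ≠ 0 := by
    intro h
    have h2 : zi^2 = -1 := by linear_combination -h
    have h3 : zi^2 = Complex.exp (((2*(-θ) : ℝ):ℂ) * Complex.I) := by
      rw [hzidef, exp_pow (-θ) 2]; norm_num
    have him := Complex.exp_ofReal_mul_I_im (2*(-θ))
    rw [← h3, h2] at him
    simp at him
    linarith
  have hcC : (Real.cos θ : ℂ) ≠ 0 := by exact_mod_cast hcne
  have SUMC4 : (∑ k ∈ Finset.Icc 1 N,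
      ((U'eval ((N:ℤ) - (k:ℤ) + 1) (Real.cos θ) * Ueval ((k:ℤ) - 1) (Real.cos θ) : ℝ) : ℂ)
        * (-1)^k * ((Real.sin θ : ℂ))^4) * (4 * (Real.cos θ : ℂ))
      = -((N:ℂ)+2) * ((Real.sin θ : ℂ))^2 := by
    rw [Finset.sum_congr rfl hterm]
    simp only [Finset.sum_add_distrib, ← Finset.mul_sum]
    have gA := geo1 (-z^2) N; rw [ha1] at gA
    have gB := geo1 (-zi^2) N; rw [hb1] at gB
    have gC := geo3 N
    have gD := geo2 (-z^2) N; rw [ha1, ha2] at gD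
    have gE := geo2 (-zi^2) N; rw [hb1, hb2] at gE
    have hDne : ((-z^2-1)^2 * (-zi^2-1)^2) ≠ 0 :=
      mul_ne_zero (pow_ne_zero 2 hden1) (pow_ne_zero 2 hden2)
    apply mul_right_cancel₀ hDne
    linear_combination
      ((4*(Real.cos θ : ℂ)) * (-((z+zi)+((N:ℂ)+2)*(z-zi))/8) * ((-z^2-1) * (-zi^2-1)^2)) * gA
      + ((4*(Real.cos θ : ℂ)) * (-((z+zi)-((N:ℂ)+2)*(z-zi))/8) * ((-zi^2-1) * (-z^2-1)^2)) * gB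
      + ((4*(Real.cos θ : ℂ)) * ((z+zi)/4) * ((-z^2-1)^2 * (-zi^2-1)^2)) * gC
      + ((4*(Real.cos θ : ℂ)) * ((z-zi)/8) * ((-zi^2-1)^2)) * gD
      + ((4*(Real.cos θ : ℂ)) * (-(z-zi)/8) * ((-z^2-1)^2)) * gE
      + ((((-1:ℂ)/2)*zi + ((1:ℂ)/2)*zi*((-1:ℂ)^N) + ((1:ℂ)/2)*zi^3*(N:ℂ) + (1:ℂ)*zi^3*((-1:ℂ)^N) + (1:ℂ)*zi^5 + ((1:ℂ)/2)*zi^5*(N:ℂ) + ((1:ℂ)/2)*zi^5*((-1:ℂ)^N) + ((-1:ℂ)/2)*z + ((1:ℂ)/2)*z*((-1:ℂ)^N) + (-1:ℂ)*z*zi^2 + ((-1:ℂ)/2)*z*zi^2*(N:ℂ) + (-1:ℂ)*z*zi^4 + ((-1:ℂ)/2)*z*zi^4*(N:ℂ) + ((-3:ℂ)/2)*z*zi^4*((-1:ℂ)^N) + (-1:ℂ)*z*zi^6*((-1:ℂ)^N) + (-1:ℂ)*z^2*zi + ((-1:ℂ)/2)*z^2*zi*(N:ℂ) + (1:ℂ)*z^2*zi^3*((-1:ℂ)^N)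 + (2:ℂ)*z^2*zi^5 + ((1:ℂ)/2)*z^2*zi^5*(N:ℂ) + (2:ℂ)*z^2*zi^5*((-1:ℂ)^N) + ((1:ℂ)/2)*z^2*zi^7*((-1:ℂ)^N) + ((1:ℂ)/2)*z^3*(N:ℂ) + (1:ℂ)*z^3*((-1:ℂ)^N) + (1:ℂ)*z^3*zi^2*((-1:ℂ)^N) + (-1:ℂ)*z^3*zi^4 + ((-1:ℂ)/2)*z^3*zi^4*(N:ℂ) + (-2:ℂ)*z^3*zi^4*((-1:ℂ)^N) + ((-3:ℂ)/2)*z^3*zi^6*((-1:ℂ)^N) + (-1:ℂ)*z^4*zi + ((-1:ℂ)/2)*z^4*zi*(N:ℂ) + ((-3:ℂ)/2)*z^4*zi*((-1:ℂ)^N) + (-1:ℂ)*z^4*zi^3 + ((-1:ℂ)/2)*z^4*zi^3*(N:ℂ) + (-2:ℂ)*z^4*zi^3*((-1:ℂ)^N) + ((1:ℂ)/2)*z^4*zi^5 + ((1:ℂ)/2)*z^4*zi^5*((-1:ℂ)^N) + (1:ℂ)*z^5 + ((1:ℂ)/2)*z^5*(N:ℂ) + ((1:ℂ)/2)*z^5*((-1:ℂ)^N)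 + (2:ℂ)*z^5*zi^2 + ((1:ℂ)/2)*z^5*zi^2*(N:ℂ) + (2:ℂ)*z^5*zi^2*((-1:ℂ)^N) + ((1:ℂ)/2)*z^5*zi^4 + ((1:ℂ)/2)*z^5*zi^4*((-1:ℂ)^N) + (-1:ℂ)*z^6*zi*((-1:ℂ)^N) + ((-3:ℂ)/2)*z^6*zi^3*((-1:ℂ)^N) + ((1:ℂ)/2)*z^7*zi^2*((-1:ℂ)^N))) * hcz
      + (((2:ℂ) + (1:ℂ)*(N:ℂ) + (4:ℂ)*zi^2 + (2:ℂ)*zi^2*(N:ℂ) + (2:ℂ)*zi^4 + (1:ℂ)*zi^4*(N:ℂ) + (4:ℂ)*z^2 + (2:ℂ)*z^2*(N:ℂ) + (8:ℂ)*z^2*zi^2 + (4:ℂ)*z^2*zi^2*(N:ℂ) + (4:ℂ)*z^2*zi^4 + (2:ℂ)*z^2*zi^4*(N:ℂ) + (2:ℂ)*z^4 + (1:ℂ)*z^4*(N:ℂ) + (4:ℂ)*z^4*zi^2 + (2:ℂ)*z^4*zi^2*(N:ℂ) + (2:ℂ)*z^4*zi^4 + (1:ℂ)*z^4*zi^4*(N:ℂ)))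 * hs2
      + ((((3:ℂ)/4)*zi^2 + ((1:ℂ)/4)*zi^2*(N:ℂ) + ((-1:ℂ)/4)*zi^2*((-1:ℂ)^N) + (1:ℂ)*zi^4 + ((1:ℂ)/4)*zi^4*(N:ℂ) + ((-1:ℂ)/2)*zi^4*((-1:ℂ)^N) + ((-1:ℂ)/4)*zi^6*((-1:ℂ)^N) + ((-1:ℂ)/2)*z*zi + ((-1:ℂ)/2)*z*zi*(N:ℂ) + ((-1:ℂ)/2)*z*zi*((-1:ℂ)^N) + ((-3:ℂ)/4)*z*zi^3 + ((-3:ℂ)/4)*z*zi^3*(N:ℂ) + ((-3:ℂ)/4)*z*zi^3*((-1:ℂ)^N) + ((-1:ℂ)/4)*z*zi^5*(N:ℂ) + ((1:ℂ)/4)*z*zi^7*((-1:ℂ)^N) + ((3:ℂ)/4)*z^2 + ((1:ℂ)/4)*z^2*(N:ℂ) + ((-1:ℂ)/4)*z^2*((-1:ℂ)^N) + ((5:ℂ)/2)*z^2*zi^2 + (1:ℂ)*z^2*zi^2*(N:ℂ) + ((-1:ℂ)/2)*z^2*zi^2*((-1:ℂ)^N) + ((9:ℂ)/4)*z^2*zi^4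 + ((3:ℂ)/4)*z^2*zi^4*(N:ℂ) + ((-1:ℂ)/2)*z^2*zi^4*((-1:ℂ)^N) + ((-1:ℂ)/2)*z^2*zi^6*((-1:ℂ)^N) + ((-3:ℂ)/4)*z^3*zi + ((-3:ℂ)/4)*z^3*zi*(N:ℂ) + ((-3:ℂ)/4)*z^3*zi*((-1:ℂ)^N) + ((-3:ℂ)/2)*z^3*zi^3 + (-1:ℂ)*z^3*zi^3*(N:ℂ) + ((-3:ℂ)/2)*z^3*zi^3*((-1:ℂ)^N) + ((-1:ℂ)/4)*z^3*zi^5 + ((-1:ℂ)/4)*z^3*zi^5*(N:ℂ) + ((-1:ℂ)/2)*z^3*zi^5*((-1:ℂ)^N) + (1:ℂ)*z^4 + ((1:ℂ)/4)*z^4*(N:ℂ) + ((-1:ℂ)/2)*z^4*((-1:ℂ)^N) + ((9:ℂ)/4)*z^4*zi^2 + ((3:ℂ)/4)*z^4*zi^2*(N:ℂ) + ((-1:ℂ)/2)*z^4*zi^2*((-1:ℂ)^N) + ((3:ℂ)/2)*z^4*zi^4 + ((1:ℂ)/2)*z^4*zi^4*(N:ℂ) + ((1:ℂ)/2)*z^4*zi^4*((-1:ℂ)^N)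 + ((-1:ℂ)/4)*z^5*zi*(N:ℂ) + ((-1:ℂ)/4)*z^5*zi^3 + ((-1:ℂ)/4)*z^5*zi^3*(N:ℂ) + ((-1:ℂ)/2)*z^5*zi^3*((-1:ℂ)^N) + ((-1:ℂ)/4)*z^6*((-1:ℂ)^N) + ((-1:ℂ)/2)*z^6*zi^2*((-1:ℂ)^N) + ((1:ℂ)/4)*z^7*zi*((-1:ℂ)^N))) * hzzi
  -- value of the derivative at N
  have hU'N : U'eval (N:ℤ) (Real.cos θ) * (Real.sin θ)^2 = ((N:ℝ)+2) * Real.cos θ := by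
    have h := deriv_eval θ (N:ℤ)
    push_cast at h
    have hang : ((N:ℝ)+1)*θ = Real.pi - θ := by linear_combination hπ
    rw [hang, Real.sin_pi_sub, Real.cos_pi_sub] at h
    apply mul_right_cancel₀ hsne
    linear_combination h
  have hU'val : U'eval (N:ℤ) (Real.cos θ) = ((N:ℝ)+2) * Real.cos θ / (Real.sin θ)^2 := by
    rw [eq_div_iff (pow_ne_zero 2 hsne)]; exact hU'N
  have hsCne : (Real.sin θ : ℂ) ≠ 0 := by exact_mod_cast hsne
  have hNC : ((N:ℂ)+2) ≠ 0 := by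
    intro h
    rw [show ((N:ℂ)+2) = ((N+2 : ℕ):ℂ) by push_cast; ring] at h
    exact_mod_cast h
  have hsum2 : (∑ k ∈ Finset.Icc 1 N,
      ((U'eval ((N:ℤ) - (k:ℤ) + 1) (Real.cos θ) * Ueval ((k:ℤ) - 1) (Real.cos θ) : ℝ) : ℂ)
        * (-1)^k) * (((Real.sin θ : ℂ))^4 * (4 * (Real.cos θ : ℂ)))
      = -((N:ℂ)+2) * ((Real.sin θ : ℂ))^2 := by
    rw [← mul_assoc, Finset.sum_mul]
    exact SUMC4
  have hSS : (∑ k ∈ Finset.Icc 1 N,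
      ((U'eval ((N:ℤ) - (k:ℤ) + 1) (Real.cos θ) * Ueval ((k:ℤ) - 1) (Real.cos θ) : ℝ) : ℂ)
        * (-1)^k)
      = (-((N:ℂ)+2) * ((Real.sin θ : ℂ))^2) / (((Real.sin θ : ℂ))^4 * (4 * (Real.cos θ : ℂ))) :=
    eq_div_of_mul_eq (mul_ne_zero (pow_ne_zero 4 hsCne)
      (mul_ne_zero (by norm_num) hcC)) hsum2
  have hSSr : (∑ k ∈ Finset.Icc 1 N,
      ((U'eval ((N:ℤ) - (k:ℤ) + 1) (Real.cos θ) * Ueval ((k:ℤ) - 1) (Real.cos θ) : ℝ) : ℂ)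
        * (-1)^k)
      = ((-((N:ℝ)+2) * Real.sin θ^2 / (Real.sin θ^4 * (4*Real.cos θ)) : ℝ) : ℂ) := by
    rw [hSS]; push_cast; ring
  have hPval : P N (-1) = ((-(1/4) * (1/Real.cos θ)^2 : ℝ) : ℂ) := by
    rw [P, ← hθdef, hSSr, ← Complex.ofReal_mul]
    congr 1
    rw [hU'val]
    field_simp
  rw [hPval, Complex.norm_real, Real.norm_eq_abs, abs_of_nonpos (by nlinarith [sq_nonneg (1/Real.cos θ)])]
  ring
end

section
/- For N = 5, the polynomial P_5 satisfies |P_5(e^{it})| ≥ (1/4)·sec²(π/7) for every real t, with equality when t = π. -/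
open Polynomial Polynomial.Chebyshev

/- Basic evaluation recurrences for Chebyshev U and its derivative. -/
lemma Ueval_add_two (n : ℤ) (y : ℝ) :
    Ueval (n+2) y = 2*y*Ueval (n+1) y - Ueval n y := by
  unfold Ueval; rw [U_add_two]; simp

lemma Ueval_zero (y : ℝ) : Ueval 0 y = 1 := by unfold Ueval; simp [U_zero]

lemma Ueval_one (y : ℝ) : Ueval 1 y = 2*y := by unfold Ueval; simp [U_one]

lemma U'eval_add_two (n : ℤ) (y : ℝ) :
    U'eval (n+2) y = 2*Ueval (n+1) y + 2*y*U'eval (n+1) y - U'eval n y := by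
  unfold U'eval Ueval; rw [U_add_two]; simp [derivative_mul]

lemma U'eval_zero (y : ℝ) : U'eval 0 y = 0 := by unfold U'eval; simp [U_zero]

lemma U'eval_one (y : ℝ) : U'eval 1 y = 2 := by unfold U'eval; simp [U_one, derivative_mul]

lemma Ueval_two (y : ℝ) : Ueval 2 y = 4*y^2-1 := by
  have := Ueval_add_two 0 y
  norm_num [Ueval_zero, Ueval_one] at this
  rw [this]; ring

lemma Ueval_three (y : ℝ) : Ueval 3 y = 8*y^3-4*y := by
  have := Ueval_add_two 1 y
  norm_num [Ueval_one, Ueval_two] at this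
  rw [this]; ring

lemma Ueval_four (y : ℝ) : Ueval 4 y = 16*y^4-12*y^2+1 := by
  have := Ueval_add_two 2 y
  norm_num [Ueval_two, Ueval_three] at this
  rw [this]; ring

lemma U'eval_two (y : ℝ) : U'eval 2 y = 8*y := by
  have := U'eval_add_two 0 y
  norm_num [U'eval_zero, U'eval_one, Ueval_one] at this
  rw [this]; ring

lemma U'eval_three (y : ℝ) : U'eval 3 y = 24*y^2-4 := by
  have := U'eval_add_two 1 y
  norm_num [U'eval_one, U'eval_two, Ueval_two] at this
  rw [this]; ring

lemma U'eval_four (y : ℝ) : U'eval 4 y = 64*y^3-24*y := by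
  have := U'eval_add_two 2 y
  norm_num [U'eval_two, U'eval_three, Ueval_three] at this
  rw [this]; ring

lemma U'eval_five (y : ℝ) : U'eval 5 y = 160*y^4-96*y^2+6 := by
  have := U'eval_add_two 3 y
  norm_num [U'eval_three, U'eval_four, Ueval_four] at this
  rw [this]; ring

/- Expansion of P 5. -/
lemma Pfive (z : ℂ) : P 5 z =
    (1 / U'eval 5 (Real.cos (Real.pi / 7)) : ℝ) *
      ((U'eval 5 (Real.cos (Real.pi / 7)) * Ueval 0 (Real.cos (Real.pi / 7)) : ℝ) * z
        + (U'eval 4 (Real.cos (Real.pi / 7)) * Ueval 1 (Real.cos (Real.pi / 7)) : ℝ) * z^2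
        + (U'eval 3 (Real.cos (Real.pi / 7)) * Ueval 2 (Real.cos (Real.pi / 7)) : ℝ) * z^3
        + (U'eval 2 (Real.cos (Real.pi / 7)) * Ueval 3 (Real.cos (Real.pi / 7)) : ℝ) * z^4
        + (U'eval 1 (Real.cos (Real.pi / 7)) * Ueval 4 (Real.cos (Real.pi / 7)) : ℝ) * z^5) := by
  unfold P
  rw [show Finset.Icc (1:ℕ) 5 = ({1,2,3,4,5} : Finset ℕ) from rfl]
  norm_num [Finset.sum_insert, Finset.mem_insert]
  exact Or.inl (by ring)

/- The minimal cubic for cos (π/7). -/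
lemma cos_pi_div_seven_cubic :
    8 * Real.cos (Real.pi/7)^3 = 4 * Real.cos (Real.pi/7)^2 + 4 * Real.cos (Real.pi/7) - 1 := by
  set c := Real.cos (Real.pi/7) with hc
  have hT : ∀ n : ℤ, ((T ℝ (n+2)).eval c) = 2*c*((T ℝ (n+1)).eval c) - (T ℝ n).eval c := by
    intro n; rw [T_add_two]; simp
  have h0 : (T ℝ 0).eval c = 1 := by simp [T_zero]
  have h1 : (T ℝ 1).eval c = c := by simp [T_one]
  have h2 : (T ℝ 2).eval c = 2*c^2-1 := by
    have := hT 0; norm_num [h0, h1] at this; rw [this]; ring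
  have h3 : (T ℝ 3).eval c = 4*c^3-3*c := by
    have := hT 1; norm_num [h1, h2] at this; rw [this]; ring
  have h4 : (T ℝ 4).eval c = 8*c^4-8*c^2+1 := by
    have := hT 2; norm_num [h2, h3] at this; rw [this]; ring
  have h5 : (T ℝ 5).eval c = 16*c^5-20*c^3+5*c := by
    have := hT 3; norm_num [h3, h4] at this; rw [this]; ring
  have h6 : (T ℝ 6).eval c = 32*c^6-48*c^4+18*c^2-1 := by
    have := hT 4; norm_num [h4, h5] at this; rw [this]; ring
  have h7 : (T ℝ 7).eval c = 64*c^7-112*c^5+56*c^3-7*c := by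
    have := hT 5; norm_num [h5, h6] at this; rw [this]; ring
  have hval : (T ℝ 7).eval c = -1 := by
    rw [hc, T_real_cos]
    rw [show ((7:ℤ):ℝ) * (Real.pi/7) = Real.pi by push_cast; ring]
    exact Real.cos_pi
  have hsept : 64*c^7-112*c^5+56*c^3-7*c = -1 := by rw [← h7, hval]
  have hpos : 0 < c + 1 := by
    have : 0 < c := Real.cos_pos_of_mem_Ioo
      ⟨by nlinarith [Real.pi_pos], by nlinarith [Real.pi_pos]⟩
    linarith
  have hsq : (8*c^3 - 4*c^2 - 4*c + 1)^2 = 0 := by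
    have hfac : (c+1) * (8*c^3 - 4*c^2 - 4*c + 1)^2 = 0 := by linear_combination hsept
    rcases mul_eq_zero.1 hfac with h | h
    · linarith
    · exact h
  have := pow_eq_zero_iff (n := 2) (by norm_num) |>.1 hsq
  linarith

/- Numeric bounds on cos (π/7). -/
lemma cos_pi_div_seven_bounds :
    9/10 ≤ Real.cos (Real.pi/7) ∧ Real.cos (Real.pi/7) ≤ 91/100 := by
  set c := Real.cos (Real.pi/7) with hcdef
  have hc3 := cos_pi_div_seven_cubic
  have h866 : (433/500 : ℝ) ≤ c := by
    have hmono : Real.cos (Real.pi/6) ≤ Real.cos (Real.pi/7) := by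
      apply Real.cos_le_cos_of_nonneg_of_le_pi (by positivity)
      · linarith [Real.pi_pos]
      · nlinarith [Real.pi_pos]
    rw [Real.cos_pi_div_six] at hmono
    have hs3 : (433/250 : ℝ) ≤ Real.sqrt 3 :=
      Real.le_sqrt_of_sq_le (by norm_num)
    calc (433/500 : ℝ) = (433/250)/2 := by norm_num
    _ ≤ Real.sqrt 3 / 2 := by linarith
    _ ≤ c := hmono
  have hfac1 : (0:ℝ) < 8*c^2 + 16/5*c - 28/25 := by nlinarith [h866]
  have hfac2 : (0:ℝ) < 8*c^2 + 82/25*c - 1269/1250 := by nlinarith [h866]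
  constructor
  · have hid : (c - 9/10) * (8*c^2 + 16/5*c - 28/25) = 1/125 := by linear_combination hc3
    nlinarith [hid, hfac1]
  · have hid : (c - 91/100) * (8*c^2 + 82/25*c - 1269/1250) = -9521/125000 := by
      linear_combination hc3
    nlinarith [hid, hfac2]

/- The key polynomial inequality. -/
set_option maxHeartbeats 2000000 in
lemma key_ineq (c x : ℝ) (hc : 8*c^3 = 4*c^2 + 4*c - 1) (hx1 : -1 ≤ x) (hx2 : x ≤ 1)
    (hcl : 9/10 ≤ c) (hch : c ≤ 91/100) :
    (160*c^4-96*c^2+6)^2 ≤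
      (((160*c^4-96*c^2+6))*x + ((64*c^3-24*c)*(2*c))*(2*x^2-1)
          + ((24*c^2-4)*(4*c^2-1))*(4*x^3-3*x) + ((8*c)*(8*c^3-4*c))*(8*x^4-8*x^2+1)
          + (2*(16*c^4-12*c^2+1))*(16*x^5-20*x^3+5*x))^2 * (4*c^2)^2
        + (1-x^2) * ((160*c^4-96*c^2+6) + ((64*c^3-24*c)*(2*c))*(2*x)
          + ((24*c^2-4)*(4*c^2-1))*(4*x^2-1) + ((8*c)*(8*c^3-4*c))*(8*x^3-4*x)
          + (2*(16*c^4-12*c^2+1))*(16*x^4-12*x^2+1))^2 * (4*c^2)^2 := by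
  have hH : (((160*c^4-96*c^2+6))*x + ((64*c^3-24*c)*(2*c))*(2*x^2-1)
          + ((24*c^2-4)*(4*c^2-1))*(4*x^3-3*x) + ((8*c)*(8*c^3-4*c))*(8*x^4-8*x^2+1)
          + (2*(16*c^4-12*c^2+1))*(16*x^5-20*x^3+5*x))^2 * (4*c^2)^2
        + (1-x^2) * ((160*c^4-96*c^2+6) + ((64*c^3-24*c)*(2*c))*(2*x)
          + ((24*c^2-4)*(4*c^2-1))*(4*x^2-1) + ((8*c)*(8*c^3-4*c))*(8*x^3-4*x)
          + (2*(16*c^4-12*c^2+1))*(16*x^4-12*x^2+1))^2 * (4*c^2)^2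
        - (160*c^4-96*c^2+6)^2
      = (1+x) * ((-1008 + 2752*c + 7936*c^2) + (-3568 + 10592*c + 24512*c^2)*x
          + (-5312 + 15488*c + 37632*c^2)*x^2 + (-2624 + 7296*c + 20224*c^2)*x^3) := by
    linear_combination (972 + 1136*c + 1648*c^2 + 3360*c^3 + 64*c^4 + 512*c^5 - 4096*c^6
      - 14848*c^7 + 13312*c^8 + 26624*c^9 + 4576*x + 4960*c*x + 5696*c^2*x + 6016*c^3*x
      + 7168*c^4*x + 7168*c^5*x + 15360*c^6*x + 32768*c^7*x - 4096*c^8*x - 8192*c^9*x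
      + 8880*x^2 + 9440*c*x^2 + 11136*c^2*x^2 + 11264*c^3*x^2 + 13056*c^4*x^2 + 8192*c^5*x^2
      + 29696*c^6*x^2 + 47104*c^7*x^2 + 24576*c^8*x^2 + 49152*c^9*x^2 + 7936*x^3 + 8960*c*x^3
      + 9728*c^2*x^3 + 11264*c^3*x^3 + 12288*c^4*x^3 + 16384*c^5*x^3 - 12288*c^6*x^3
      - 81920*c^7*x^3 + 114688*c^8*x^3 + 229376*c^9*x^3 + 2624*x^4 + 3200*c*x^4 + 3072*c^2*x^4
      + 4096*c^3*x^4 + 6144*c^4*x^4 + 16384*c^5*x^4 - 28672*c^6*x^4 - 98304*c^7*x^4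
      + 81920*c^8*x^4 + 163840*c^9*x^4) * hc
  have hu0 : (0:ℝ) ≤ 1 + x := by linarith
  have ha0 : (0:ℝ) < -128 + 352*c + 832*c^2 := by nlinarith [sq_nonneg (c - 9/10)]
  have ha3 : (0:ℝ) < -2624 + 7296*c + 20224*c^2 := by nlinarith [sq_nonneg (c - 9/10)]
  have hD4 : (0:ℝ) < 2011136 - 6832128*c - 49233920*c^2 + 116260864*c^3 + 271646720*c^4 := by
    nlinarith [sq_nonneg (c - 9/10), sq_nonneg (c - 91/100),
      mul_nonneg (by linarith : (0:ℝ) ≤ c - 9/10) (by linarith : (0:ℝ) ≤ 91/100 - c),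
      sq_nonneg c]
  have hq : (0:ℝ) < (-816 + 1504*c + 9920*c^2) + (2560 - 6400*c - 23040*c^2)*(1+x)
      + (-2624 + 7296*c + 20224*c^2)*(1+x)^2 := by
    have hid : 4 * (-2624 + 7296*c + 20224*c^2) * ((-816 + 1504*c + 9920*c^2)
        + (2560 - 6400*c - 23040*c^2)*(1+x) + (-2624 + 7296*c + 20224*c^2)*(1+x)^2)
      = (2*(-2624 + 7296*c + 20224*c^2)*(1+x) + (2560 - 6400*c - 23040*c^2))^2
        + (2011136 - 6832128*c - 49233920*c^2 + 116260864*c^3 + 271646720*c^4) := by ring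
    nlinarith [sq_nonneg (2*(-2624 + 7296*c + 20224*c^2)*(1+x) + (2560 - 6400*c - 23040*c^2)),
      hD4, ha3, hid]
  have hHval : (0:ℝ) ≤ ((-1008 + 2752*c + 7936*c^2) + (-3568 + 10592*c + 24512*c^2)*x
      + (-5312 + 15488*c + 37632*c^2)*x^2 + (-2624 + 7296*c + 20224*c^2)*x^3) := by
    have hdec : ((-1008 + 2752*c + 7936*c^2) + (-3568 + 10592*c + 24512*c^2)*x
        + (-5312 + 15488*c + 37632*c^2)*x^2 + (-2624 + 7296*c + 20224*c^2)*x^3)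
      = (-128 + 352*c + 832*c^2) + (1+x) * ((-816 + 1504*c + 9920*c^2)
          + (2560 - 6400*c - 23040*c^2)*(1+x) + (-2624 + 7296*c + 20224*c^2)*(1+x)^2) := by
      ring
    rw [hdec]
    have := mul_nonneg hu0 hq.le
    linarith
  have hfin := mul_nonneg hu0 hHval
  linarith [hH, hfin]

theorem stmt14 :
    (∀ t : ℝ, (1 / 4) * (1 / Real.cos (Real.pi / 7)) ^ 2 ≤
        ‖P 5 (Complex.exp (Complex.I * t))‖) ∧
      ‖P 5 (Complex.exp (Complex.I * Real.pi))‖ =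
        (1 / 4) * (1 / Real.cos (Real.pi / 7)) ^ 2 := by
  set c := Real.cos (Real.pi/7) with hcdef
  obtain ⟨hcl, hch⟩ := cos_pi_div_seven_bounds
  have hc3 := cos_pi_div_seven_cubic
  have hc0 : (0:ℝ) < c := by linarith
  have hw : (0:ℝ) < 160*c^4-96*c^2+6 := by nlinarith [sq_nonneg (c^2 - 81/100)]
  have hvals : U'eval 5 c = 160*c^4-96*c^2+6 ∧ U'eval 4 c = 64*c^3-24*c
      ∧ U'eval 3 c = 24*c^2-4 ∧ U'eval 2 c = 8*c ∧ U'eval 1 c = 2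
      ∧ Ueval 0 c = 1 ∧ Ueval 1 c = 2*c ∧ Ueval 2 c = 4*c^2-1
      ∧ Ueval 3 c = 8*c^3-4*c ∧ Ueval 4 c = 16*c^4-12*c^2+1 :=
    ⟨U'eval_five c, U'eval_four c, U'eval_three c, U'eval_two c, U'eval_one c,
      Ueval_zero c, Ueval_one c, Ueval_two c, Ueval_three c, Ueval_four c⟩
  obtain ⟨e5, e4, e3, e2, e1, u0, u1, u2, u3, u4⟩ := hvals
  constructor
  · intro t
    set x := Real.cos t with hx
    set s := Real.sin t with hs
    have hx1 : -1 ≤ x := Real.neg_one_le_cos t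
    have hx2 : x ≤ 1 := Real.cos_le_one t
    have hpyth : s^2 = 1 - x^2 := by
      have := Real.sin_sq_add_cos_sq t
      rw [hx, hs]; nlinarith [this]
    -- multiple angle formulas
    have hC2 : Real.cos (2*t) = 2*x^2 - 1 := by rw [Real.cos_two_mul]
    have hS2 : Real.sin (2*t) = s*(2*x) := by rw [Real.sin_two_mul]; ring
    have hC3 : Real.cos (3*t) = 4*x^3 - 3*x := by
      rw [show (3:ℝ)*t = 2*t + t by ring, Real.cos_add, hC2, hS2]
      linear_combination (-2*x) * hpyth
    have hS3 : Real.sin (3*t) = s*(4*x^2-1) := by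
      rw [show (3:ℝ)*t = 2*t + t by ring, Real.sin_add, hC2, hS2]; ring
    have hC4 : Real.cos (4*t) = 8*x^4 - 8*x^2 + 1 := by
      rw [show (4:ℝ)*t = 2*(2*t) by ring, Real.cos_two_mul, hC2]; ring
    have hS4 : Real.sin (4*t) = s*(8*x^3-4*x) := by
      rw [show (4:ℝ)*t = 2*(2*t) by ring, Real.sin_two_mul, hC2, hS2]; ring
    have hC5 : Real.cos (5*t) = 16*x^5 - 20*x^3 + 5*x := by
      rw [show (5:ℝ)*t = 4*t + t by ring, Real.cos_add, hC4, hS4]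
      linear_combination (-(8*x^3-4*x)) * hpyth
    have hS5 : Real.sin (5*t) = s*(16*x^4-12*x^2+1) := by
      rw [show (5:ℝ)*t = 4*t + t by ring, Real.sin_add, hC4, hS4]; ring
    have hzk : ∀ k : ℕ, (Complex.exp (Complex.I * t))^k
        = ((Real.cos (k*t) : ℝ) : ℂ) + ((Real.sin (k*t) : ℝ) : ℂ) * Complex.I := by
      intro k
      rw [← Complex.exp_nat_mul]
      rw [show ((k:ℂ) * (Complex.I * t)) = (((k*t : ℝ) : ℂ)) * Complex.I by push_cast; ring]
      rw [Complex.exp_mul_I, Complex.ofReal_cos, Complex.ofReal_sin]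
    have hz1 := hzk 1
    have hz2 := hzk 2
    have hz3 := hzk 3
    have hz4 := hzk 4
    have hz5 := hzk 5
    simp only [Nat.cast_ofNat, Nat.cast_one, one_mul] at hz1 hz2 hz3 hz4 hz5
    rw [hC2, hS2] at hz2
    rw [hC3, hS3] at hz3
    rw [hC4, hS4] at hz4
    rw [hC5, hS5] at hz5
    have hA : P 5 (Complex.exp (Complex.I * t)) = ((1/(160*c^4-96*c^2+6) : ℝ) : ℂ) *
        ((((160*c^4-96*c^2+6)*x + ((64*c^3-24*c)*(2*c))*(2*x^2-1)
          + ((24*c^2-4)*(4*c^2-1))*(4*x^3-3*x) + ((8*c)*(8*c^3-4*c))*(8*x^4-8*x^2+1)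
          + (2*(16*c^4-12*c^2+1))*(16*x^5-20*x^3+5*x) : ℝ) : ℂ)
        + (((160*c^4-96*c^2+6)*s + ((64*c^3-24*c)*(2*c))*(s*(2*x))
          + ((24*c^2-4)*(4*c^2-1))*(s*(4*x^2-1)) + ((8*c)*(8*c^3-4*c))*(s*(8*x^3-4*x))
          + (2*(16*c^4-12*c^2+1))*(s*(16*x^4-12*x^2+1)) : ℝ) : ℂ) * Complex.I) := by
      rw [Pfive, ← hcdef, e5, e4, e3, e2, e1, u0, u1, u2, u3, u4]
      rw [pow_one] at hz1
      rw [hz2, hz3, hz4, hz5, hz1, ← hx, ← hs]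
      push_cast
      ring
    rw [hA, norm_mul, Complex.norm_real, Real.norm_eq_abs, Complex.norm_add_mul_I]
    have habs : |(1/(160*c^4-96*c^2+6) : ℝ)| = 1/(160*c^4-96*c^2+6) := by
      rw [abs_of_pos]; positivity
    rw [habs]
    have hkey := key_ineq c x hc3 hx1 hx2 hcl hch
    have hBsq : ((160*c^4-96*c^2+6)*s + ((64*c^3-24*c)*(2*c))*(s*(2*x))
          + ((24*c^2-4)*(4*c^2-1))*(s*(4*x^2-1)) + ((8*c)*(8*c^3-4*c))*(s*(8*x^3-4*x))
          + (2*(16*c^4-12*c^2+1))*(s*(16*x^4-12*x^2+1)))^2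
        = (1-x^2) * ((160*c^4-96*c^2+6) + ((64*c^3-24*c)*(2*c))*(2*x)
          + ((24*c^2-4)*(4*c^2-1))*(4*x^2-1) + ((8*c)*(8*c^3-4*c))*(8*x^3-4*x)
          + (2*(16*c^4-12*c^2+1))*(16*x^4-12*x^2+1))^2 := by
      linear_combination (((160*c^4-96*c^2+6) + ((64*c^3-24*c)*(2*c))*(2*x)
          + ((24*c^2-4)*(4*c^2-1))*(4*x^2-1) + ((8*c)*(8*c^3-4*c))*(8*x^3-4*x)
          + (2*(16*c^4-12*c^2+1))*(16*x^4-12*x^2+1))^2) * hpyth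
    have hsqrt : (160*c^4-96*c^2+6)/(4*c^2) ≤
        Real.sqrt (((160*c^4-96*c^2+6)*x + ((64*c^3-24*c)*(2*c))*(2*x^2-1)
          + ((24*c^2-4)*(4*c^2-1))*(4*x^3-3*x) + ((8*c)*(8*c^3-4*c))*(8*x^4-8*x^2+1)
          + (2*(16*c^4-12*c^2+1))*(16*x^5-20*x^3+5*x))^2
        + ((160*c^4-96*c^2+6)*s + ((64*c^3-24*c)*(2*c))*(s*(2*x))
          + ((24*c^2-4)*(4*c^2-1))*(s*(4*x^2-1)) + ((8*c)*(8*c^3-4*c))*(s*(8*x^3-4*x))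
          + (2*(16*c^4-12*c^2+1))*(s*(16*x^4-12*x^2+1)))^2) := by
      apply Real.le_sqrt_of_sq_le
      rw [hBsq, div_pow, div_le_iff₀ (by positivity)]
      refine le_trans hkey (le_of_eq ?_)
      ring
    calc (1/4) * (1/c)^2 = (1/(160*c^4-96*c^2+6)) * ((160*c^4-96*c^2+6)/(4*c^2)) := by
          field_simp
          exact (div_self (ne_of_gt (by linarith [hw]))).symm
    _ ≤ _ := by
          apply mul_le_mul_of_nonneg_left hsqrt
          positivity
  · have hexp : Complex.exp (Complex.I * Real.pi) = -1 := by
      rw [mul_comm]; exact Complex.exp_pi_mul_I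
    rw [hexp, Pfive, ← hcdef, e5, e4, e3, e2, e1, u0, u1, u2, u3, u4]
    have hval : ((1/(160*c^4-96*c^2+6) : ℝ) : ℂ) *
        ((((160*c^4-96*c^2+6)*1 : ℝ) : ℂ) * (-1)
          + (((64*c^3-24*c)*(2*c) : ℝ) : ℂ) * (-1)^2
          + (((24*c^2-4)*(4*c^2-1) : ℝ) : ℂ) * (-1)^3
          + (((8*c)*(8*c^3-4*c) : ℝ) : ℂ) * (-1)^4
          + ((2*(16*c^4-12*c^2+1) : ℝ) : ℂ) * (-1)^5)
        = ((-(1/4) * (1/c)^2 : ℝ) : ℂ) := by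
      have hre : (1/(160*c^4-96*c^2+6) : ℝ) *
          (-((160*c^4-96*c^2+6)*1) + (64*c^3-24*c)*(2*c) - (24*c^2-4)*(4*c^2-1)
            + (8*c)*(8*c^3-4*c) - 2*(16*c^4-12*c^2+1))
          = -(1/4) * (1/c)^2 := by
        rw [div_mul_eq_mul_div, div_eq_iff (by positivity)]
        field_simp
        linear_combination ((6:ℝ) + 24*c - 24*c^2 - 48*c^3) * hc3
      have hre' := congrArg (Complex.ofReal) hre
      rw [← hre']
      push_cast
      ring
    rw [hval, Complex.norm_real, Real.norm_eq_abs]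
    have h1 : (0:ℝ) < (1/4)*(1/c)^2 := by positivity
    rw [show (-(1/4) * (1/c)^2 : ℝ) = -((1/4)*(1/c)^2) by ring, abs_neg, abs_of_pos h1]
end

section
/- For every positive integer n, the Suffridge polynomial S_{n,1} satisfies |S_{n,1}(−1)| = (1/4)·((n+1)/n)·sec²(π/(2(n+1))). -/
/-- The Suffridge polynomial
`S_{n,j}(z) = Σ_{k=1}^n (1 − (k−1)/n) · (sin(πjk/(n+1))/sin(πj/(n+1))) · z^k`. -/
noncomputable def S (n j : ℕ) (z : ℂ) : ℂ :=
  ∑ k ∈ Finset.Icc 1 n,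
    ((1 - ((k : ℝ) - 1) / n) *
      (Real.sin (Real.pi * j * k / (n + 1)) / Real.sin (Real.pi * j / (n + 1))) : ℝ) * z ^ k

lemma sumSin (α : ℝ) : ∀ N : ℕ,
    (∑ k ∈ Finset.Icc 1 N, Real.sin (k * α)) * (2 * Real.sin (α / 2)) =
      Real.cos (α / 2) - Real.cos ((N + 1 / 2) * α) := by
  intro N
  induction N with
  | zero => simp; ring_nf
  | succ N ih =>
      rw [Finset.sum_Icc_succ_top (by omega)]
      have h := Real.cos_sub_cos ((N + 1 / 2) * α) ((N + 1 + 1 / 2) * α)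
      have h1 : ((N + 1 / 2) * α + (N + 1 + 1 / 2) * α) / 2 = (N + 1 : ℕ) * α := by
        push_cast; ring
      have h2 : ((N + 1 / 2) * α - (N + 1 + 1 / 2) * α) / 2 = -(α / 2) := by ring
      rw [h1, h2, Real.sin_neg] at h
      push_cast at h ⊢
      nlinarith [ih, h]

lemma sumFejer (α : ℝ) : ∀ N : ℕ,
    (∑ k ∈ Finset.Icc 1 N, ((N : ℝ) + 1 - k) * Real.sin (k * α)) *
        (4 * Real.sin (α / 2) ^ 2) =
      ((N : ℝ) + 1) * Real.sin α - Real.sin (((N : ℝ) + 1) * α) := by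
  intro N
  induction N with
  | zero => simp
  | succ N ih =>
      have split : (∑ k ∈ Finset.Icc 1 (N + 1), ((N + 1 : ℕ) + 1 - (k : ℝ)) * Real.sin (k * α))
          = (∑ k ∈ Finset.Icc 1 N, ((N : ℝ) + 1 - k) * Real.sin (k * α))
            + (∑ k ∈ Finset.Icc 1 (N + 1), Real.sin (k * α)) := by
        rw [Finset.sum_Icc_succ_top (by omega : 1 ≤ N + 1),
          show (∑ k ∈ Finset.Icc 1 (N + 1), Real.sin (k * α))
              = (∑ k ∈ Finset.Icc 1 N, Real.sin (k * α)) + Real.sin (((N + 1 : ℕ) : ℝ) * α)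
            from Finset.sum_Icc_succ_top (by omega) _,
          ← add_assoc, ← Finset.sum_add_distrib]
        push_cast
        rw [Finset.sum_congr rfl (fun k _ => by ring :
          ∀ k ∈ Finset.Icc 1 N, ((N : ℝ) + 1 - k) * Real.sin (k * α) + Real.sin (k * α)
            = ((N : ℝ) + 1 + 1 - k) * Real.sin (k * α))]
        ring
      rw [split, add_mul]
      have hs := sumSin α (N + 1)
      -- sin α = 2 sin(α/2) cos(α/2)
      have hsa : Real.sin α = 2 * Real.sin (α / 2) * Real.cos (α / 2) := by
        rw [← Real.sin_two_mul]; ring_nf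
      -- 2 sin(α/2) cos((N+1+1/2)α) = sin((N+2)α) - sin((N+1)α)
      have hd := Real.sin_sub_sin (((N : ℝ) + 2) * α) (((N : ℝ) + 1) * α)
      have h1 : ((((N : ℝ) + 2) * α - ((N : ℝ) + 1) * α) / 2) = α / 2 := by ring
      have h2 : ((((N : ℝ) + 2) * α + ((N : ℝ) + 1) * α) / 2) = ((N : ℝ) + 1 + 1 / 2) * α := by
        ring
      rw [h1, h2] at hd
      push_cast at hs ih ⊢
      rw [show ((N : ℝ) + 1 + 1) * α = ((N : ℝ) + 2) * α from by ring]
      linear_combination ih + (2 * Real.sin (α / 2)) * hs - hsa + hd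

theorem stmt19 (n : ℕ) (hn : 0 < n) :
    ‖S n 1 (-1)‖ =
      (1 / 4) * (((n : ℝ) + 1) / n) * (1 / Real.cos (Real.pi / (2 * (n + 1)))) ^ 2 := by
  have hn' : (n : ℝ) ≠ 0 := Nat.cast_ne_zero.mpr hn.ne'
  have hn1 : (0 : ℝ) < (n : ℝ) + 1 := by positivity
  set θ : ℝ := Real.pi / (n + 1) with hθ
  have hθpos : 0 < θ := by positivity
  have hθlt : θ < Real.pi := by
    rw [hθ, div_lt_iff₀ hn1]
    nlinarith [Real.pi_pos, (by exact_mod_cast hn : (1 : ℝ) ≤ n)]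
  have hsinθ : 0 < Real.sin θ := Real.sin_pos_of_pos_of_lt_pi hθpos hθlt
  have hcos : 0 < Real.cos (θ / 2) :=
    Real.cos_pos_of_mem_Ioo ⟨by linarith [Real.pi_pos], by linarith⟩
  set α : ℝ := θ - Real.pi with hα
  -- each term: (-1)^k sin(kθ) = sin(kα)
  have hterm : ∀ k : ℕ, Real.sin (k * α) = (-1 : ℝ) ^ k * Real.sin (k * θ) := by
    intro k
    have : (k : ℝ) * α = (k : ℝ) * θ - k * Real.pi := by rw [hα]; ring
    rw [this, Real.sin_sub, Real.sin_nat_mul_pi]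
    have hc : Real.cos ((k : ℝ) * Real.pi) = (-1 : ℝ) ^ k := by
      have := Real.cos_nat_mul_pi_sub 0 k
      simpa using this
    rw [hc]; ring
  -- the real sum
  have hreal : S n 1 (-1) =
      ((∑ k ∈ Finset.Icc 1 n, (1 - ((k : ℝ) - 1) / n) *
        (Real.sin (Real.pi * 1 * k / (n + 1)) / Real.sin (Real.pi * 1 / (n + 1))) *
        (-1 : ℝ) ^ k : ℝ) : ℂ) := by
    rw [S, Complex.ofReal_sum]
    apply Finset.sum_congr rfl
    intro k _
    push_cast
    ring
  -- compute the real sum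
  have hargs : ∀ k : ℕ, Real.pi * 1 * k / (n + 1) = k * θ := by
    intro k; rw [hθ]; ring
  have harg1 : Real.pi * 1 / (n + 1) = θ := by rw [hθ]; ring
  have key : (∑ k ∈ Finset.Icc 1 n, (1 - ((k : ℝ) - 1) / n) *
        (Real.sin (Real.pi * 1 * k / (n + 1)) / Real.sin (Real.pi * 1 / (n + 1))) *
        (-1 : ℝ) ^ k)
      = (∑ k ∈ Finset.Icc 1 n, ((n : ℝ) + 1 - k) * Real.sin (k * α)) / (n * Real.sin θ) := by
    rw [Finset.sum_div]
    apply Finset.sum_congr rfl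
    intro k _
    rw [hargs k, harg1, hterm k]
    field_simp
    ring
  have hF := sumFejer α n
  -- simplify: sin(α/2) = -cos(θ/2), sin α = -sin θ, sin((n+1)α) = 0
  have e1 : Real.sin (α / 2) = -Real.cos (θ / 2) := by
    rw [hα]
    have : (θ - Real.pi) / 2 = -(Real.pi / 2 - θ / 2) := by ring
    rw [this, Real.sin_neg, Real.sin_pi_div_two_sub]
  have e2 : Real.sin α = -Real.sin θ := by
    rw [hα, Real.sin_sub, Real.sin_pi, Real.cos_pi]; ring
  have e3 : Real.sin (((n : ℝ) + 1) * α) = 0 := by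
    have h : ((n : ℝ) + 1) * α = -(n * Real.pi) := by
      rw [hα, hθ]; field_simp; ring
    rw [h, Real.sin_neg, Real.sin_nat_mul_pi, neg_zero]
  rw [e1, e2, e3] at hF
  have hF' : (∑ k ∈ Finset.Icc 1 n, ((n : ℝ) + 1 - k) * Real.sin (k * α))
      = -(((n : ℝ) + 1) * Real.sin θ) / (4 * Real.cos (θ / 2) ^ 2) := by
    have h4 : (4 : ℝ) * Real.cos (θ / 2) ^ 2 ≠ 0 := by positivity
    field_simp
    nlinarith [hF]
  rw [hreal, Complex.norm_real, Real.norm_eq_abs, key, hF']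
  have hcθ : Real.cos (Real.pi / (2 * ((n : ℝ) + 1))) = Real.cos (θ / 2) := by
    rw [hθ]; congr 1
    have h1 : ((n : ℝ) + 1) ≠ 0 := ne_of_gt hn1
    field_simp
  rw [hcθ]
  rw [abs_div, abs_div, abs_neg]
  rw [abs_of_pos (by positivity : (0 : ℝ) < ((n : ℝ) + 1) * Real.sin θ)]
  rw [abs_of_pos (by positivity : (0 : ℝ) < 4 * Real.cos (θ / 2) ^ 2)]
  rw [abs_of_pos (by positivity : (0 : ℝ) < (n : ℝ) * Real.sin θ)]
  field_simp
end
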